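/- Under the LATE assumptions and EMCO, with κ := 1 − (1−1(D>0))·Z/P(Z=1) − 1(D>0)·(1−Z)/P(Z=0), for any bounded measurable function g of (Y, 1(D>0)): E[κ·g(Y, 1(D>0))] / P(D(1)>D(0)) = E[g(Y, 1(D>0)) | D(1)>D(0)=0]. -/

import Mathlib

open MeasureTheory ProbabilityTheory

variable {Ω : Type*}

/-- probability of a set -/
noncomputable def pr [MeasurableSpace Ω] (μ : MeasureTheory.Measure Ω) (A : Set Ω) : ℝ :=
  (μ A).toReal

/-- conditional probability P(A | B) -/
noncomputable def cP [MeasurableSpace Ω] (μ : MeasureTheory.Measure Ω) (A B : Set Ω) : ℝ :=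
  pr μ (A ∩ B) / pr μ B

/-- conditional expectation E[f | B] -/
noncomputable def cE [MeasurableSpace Ω] (μ : MeasureTheory.Measure Ω) (f : Ω → ℝ) (B : Set Ω) : ℝ :=
  (∫ ω in B, f ω ∂μ) / pr μ B

/-- observed treatment D = Z·D(1) + (1−Z)·D(0) -/
def obsD (Z D0 D1 : Ω → ℕ) : Ω → ℕ := fun ω => if Z ω = 1 then D1 ω else D0 ω

/-- observed outcome Y = Y(D) -/
noncomputable def obsY (Z D0 D1 : Ω → ℕ) (Yp : ℕ → Ω → ℝ) : Ω → ℝ :=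
  fun ω => Yp (obsD Z D0 D1 ω) ω

lemma my_integrable [MeasurableSpace Ω] {μ : Measure Ω} [IsProbabilityMeasure μ]
    {f : Ω → ℝ} (hm : Measurable f) {C : ℝ} (hb : ∀ ω, |f ω| ≤ C) : Integrable f μ :=
  Integrable.mono' (integrable_const C) hm.aestronglyMeasurable
    (Filter.Eventually.of_forall fun ω => by simpa using hb ω)

lemma eval_meas : Measurable fun p : (ℕ → ℝ) × ℕ => p.1 p.2 :=
  measurable_from_prod_countable_left fun d => measurable_pi_apply d

lemma abs_one_sub_le {x c : ℝ} (hx : |x| ≤ c) : |1 - x| ≤ 1 + c := by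
  have h := abs_le.mp hx
  rw [abs_le]; constructor <;> linarith [h.1, h.2]

/-- Abadie-style kappa weighting identifies complier moments of
(Y, 1(D>0)) under LATE + EMCO. -/
theorem kappa_identifies_complier_moments
    [MeasurableSpace Ω] (μ : MeasureTheory.Measure Ω) [IsProbabilityMeasure μ]
    (Dbar : ℕ) (Z D0 D1 : Ω → ℕ) (Yp : ℕ → Ω → ℝ)
    (hZ01 : ∀ ω, Z ω = 0 ∨ Z ω = 1)
    (hZm : Measurable Z) (hD0m : Measurable D0) (hD1m : Measurable D1)
    (hD0b : ∀ ω, D0 ω ≤ Dbar) (hD1b : ∀ ω, D1 ω ≤ Dbar)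
    (hYm : ∀ d, Measurable (Yp d))
    (hindep : IndepFun (fun ω => (D0 ω, D1 ω, fun d => Yp d ω)) Z μ)
    (hmono : ∀ᵐ ω ∂μ, D0 ω ≤ D1 ω)
    (hemco : ∀ᵐ ω ∂μ, D0 ω < D1 ω → D0 ω = 0)
    (hZ1pos : 0 < pr μ {ω | Z ω = 1}) (hZ1lt : pr μ {ω | Z ω = 1} < 1)
    (hcomp : 0 < pr μ {ω | D0 ω < D1 ω})
    (g : ℝ × ℝ → ℝ) (hgm : Measurable g) (hgb : ∃ C, ∀ x, |g x| ≤ C) :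
    (∫ ω, (1 - (1 - (if 0 < obsD Z D0 D1 ω then (1 : ℝ) else 0)) * (Z ω : ℝ) /
              pr μ {ω' | Z ω' = 1} -
            (if 0 < obsD Z D0 D1 ω then (1 : ℝ) else 0) * (1 - (Z ω : ℝ)) /
              pr μ {ω' | Z ω' = 0}) *
        g (obsY Z D0 D1 Yp ω, if 0 < obsD Z D0 D1 ω then 1 else 0) ∂μ) /
      pr μ {ω | D0 ω < D1 ω} =
    cE μ (fun ω => g (obsY Z D0 D1 Yp ω, if 0 < obsD Z D0 D1 ω then 1 else 0))
      {ω | D0 ω = 0 ∧ 0 < D1 ω} := by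
  obtain ⟨C, hC⟩ := hgb
  have hC0 : 0 ≤ C := le_trans (abs_nonneg _) (hC (0, 0))
  obtain ⟨I, hI⟩ : ∃ I : Ω → ℝ, ∀ ω, I ω = if 0 < obsD Z D0 D1 ω then (1 : ℝ) else 0 :=
    ⟨_, fun _ => rfl⟩
  obtain ⟨f, hf⟩ : ∃ f : Ω → ℝ, ∀ ω, f ω = g (obsY Z D0 D1 Yp ω, I ω) := ⟨_, fun _ => rfl⟩
  simp only [← hI, ← hf]
  set p := pr μ {ω | Z ω = 1} with hpdef
  set q := pr μ {ω | Z ω = 0} with hqdef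
  set Cs := {ω | D0 ω = 0 ∧ 0 < D1 ω} with hCsdef
  have hmZ1 : MeasurableSet {ω | Z ω = 1} := hZm (measurableSet_singleton 1)
  have hq1p : q = 1 - p := by
    have hcset : {ω | Z ω = 0} = {ω | Z ω = 1}ᶜ := by
      ext ω; rcases hZ01 ω with h | h <;> simp [h]
    rw [hqdef, hpdef, hcset, pr, pr, prob_compl_eq_one_sub hmZ1,
      ENNReal.toReal_sub_of_le prob_le_one ENNReal.one_ne_top, ENNReal.toReal_one]
  have hppos : 0 < p := hZ1pos
  have hqpos : 0 < q := by rw [hq1p]; linarith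
  have hpne : p ≠ 0 := ne_of_gt hppos
  have hqne : q ≠ 0 := ne_of_gt hqpos
  -- the "type" space
  set W : Ω → ℕ × ℕ × (ℕ → ℝ) := fun ω => (D0 ω, D1 ω, fun d => Yp d ω) with hW
  have hWm : Measurable W := hD0m.prodMk (hD1m.prodMk (measurable_pi_lambda _ hYm))
  obtain ⟨h0, hh0⟩ : ∃ h : ℕ × ℕ × (ℕ → ℝ) → ℝ,
      ∀ w, h w = if w.1 = 0 ∧ w.2.1 = 0 then g (w.2.2 0, 0) else 0 := ⟨_, fun _ => rfl⟩
  obtain ⟨h1, hh1⟩ : ∃ h : ℕ × ℕ × (ℕ → ℝ) → ℝ,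
      ∀ w, h w = if w.1 = w.2.1 ∧ 0 < w.1 then g (w.2.2 w.1, 1) else 0 := ⟨_, fun _ => rfl⟩
  have h0m : Measurable h0 := by
    rw [funext hh0]
    apply Measurable.ite
    · exact ((measurable_fst (measurableSet_singleton 0)).inter
        (measurable_snd.fst (measurableSet_singleton 0)))
    · exact hgm.comp (((measurable_pi_apply 0).comp measurable_snd.snd).prodMk measurable_const)
    · exact measurable_const
  have h1m : Measurable h1 := by
    rw [funext hh1]
    apply Measurable.ite
    · apply MeasurableSet.inter
      · exact measurableSet_eq_fun measurable_fst measurable_snd.fst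
      · exact measurable_fst (Set.to_countable {n : ℕ | 0 < n}).measurableSet
    · exact hgm.comp
        ((eval_meas.comp ((measurable_snd.snd).prodMk measurable_fst)).prodMk measurable_const)
    · exact measurable_const
  have h0b : ∀ w, |h0 w| ≤ C := by
    intro w; rw [hh0]; split_ifs
    · exact hC _
    · simpa using hC0
  have h1b : ∀ w, |h1 w| ≤ C := by
    intro w; rw [hh1]; split_ifs
    · exact hC _
    · simpa using hC0
  -- measurability on Ω
  have hDm : Measurable (obsD Z D0 D1) :=
    Measurable.ite (hZm (measurableSet_singleton 1)) hD1m hD0m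
  have haux : Measurable fun x : Ω × ℕ => Yp x.2 x.1 :=
    measurable_from_prod_countable_left fun d => hYm d
  have hYobsm : Measurable (obsY Z D0 D1 Yp) := haux.comp (measurable_id.prodMk hDm)
  have hIm : Measurable I := by
    rw [funext hI]
    exact Measurable.ite (hDm (Set.to_countable {n : ℕ | 0 < n}).measurableSet)
      measurable_const measurable_const
  have hfm : Measurable f := by
    rw [funext hf]
    exact hgm.comp (hYobsm.prodMk hIm)
  have hfb : ∀ ω, |f ω| ≤ C := fun ω => by rw [hf]; exact hC _
  have hZrm : Measurable fun ω => (Z ω : ℝ) := measurable_from_top.comp hZm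
  have hZrb : ∀ ω, |(Z ω : ℝ)| ≤ 1 := fun ω => by rcases hZ01 ω with h | h <;> simp [h]
  have hZrb' : ∀ ω, |1 - (Z ω : ℝ)| ≤ 1 := fun ω => by rcases hZ01 ω with h | h <;> simp [h]
  have hCsm : MeasurableSet Cs :=
    (hD0m (measurableSet_singleton 0)).inter
      (hD1m (Set.to_countable {n : ℕ | 0 < n}).measurableSet)
  -- equality of denominators
  have hden : pr μ {ω | D0 ω < D1 ω} = pr μ Cs := by
    unfold pr; congr 1
    apply measure_congr
    rw [Filter.eventuallyEq_set]
    filter_upwards [hemco] with ω he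
    simp only [Set.mem_setOf_eq, hCsdef]
    constructor
    · intro h; exact ⟨he h, lt_of_le_of_lt (Nat.zero_le _) h⟩
    · rintro ⟨h1', h2'⟩; omega
  -- independence consequences
  have hcastm : Measurable fun n : ℕ => (n : ℝ) := measurable_from_top
  have intZr : Integrable (fun ω => (Z ω : ℝ)) μ := my_integrable hZrm hZrb
  have inth0 : Integrable (fun ω => h0 (W ω)) μ := my_integrable (h0m.comp hWm) fun ω => h0b _
  have inth1 : Integrable (fun ω => h1 (W ω)) μ := my_integrable (h1m.comp hWm) fun ω => h1b _
  have intZrh0 : Integrable (fun ω => (Z ω : ℝ) * h0 (W ω)) μ := by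
    apply my_integrable (hZrm.mul (h0m.comp hWm)) (C := 1 * C)
    intro ω; dsimp only [Pi.mul_apply, Function.comp_apply]; rw [abs_mul]
    exact mul_le_mul (hZrb ω) (h0b _) (abs_nonneg _) zero_le_one
  have intZrh1 : Integrable (fun ω => (Z ω : ℝ) * h1 (W ω)) μ := by
    apply my_integrable (hZrm.mul (h1m.comp hWm)) (C := 1 * C)
    intro ω; dsimp only [Pi.mul_apply, Function.comp_apply]; rw [abs_mul]
    exact mul_le_mul (hZrb ω) (h1b _) (abs_nonneg _) zero_le_one
  have hZrint : ∫ ω, (Z ω : ℝ) ∂μ = p := by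
    have hrw : (fun ω => (Z ω : ℝ)) = {ω | Z ω = 1}.indicator (fun _ => (1 : ℝ)) := by
      funext ω; rcases hZ01 ω with h | h <;> simp [Set.indicator_apply, h]
    rw [hrw, integral_indicator_const _ hmZ1, hpdef]
    simp [pr, smul_eq_mul]
    rfl
  have hind0 : IndepFun (fun ω => (Z ω : ℝ)) (fun ω => h0 (W ω)) μ := by
    have h := (hindep.comp h0m hcastm).symm
    exact h
  have hind1 : IndepFun (fun ω => (Z ω : ℝ)) (fun ω => h1 (W ω)) μ := by
    have h := (hindep.comp h1m hcastm).symm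
    exact h
  have hmul0 : ∫ ω, (Z ω : ℝ) * h0 (W ω) ∂μ = p * ∫ ω, h0 (W ω) ∂μ := by
    have h := hind0.integral_fun_mul_eq_mul_integral intZr.aestronglyMeasurable inth0.aestronglyMeasurable
    rw [hZrint] at h
    exact h
  have hmul1 : ∫ ω, (Z ω : ℝ) * h1 (W ω) ∂μ = p * ∫ ω, h1 (W ω) ∂μ := by
    have h := hind1.integral_fun_mul_eq_mul_integral intZr.aestronglyMeasurable inth1.aestronglyMeasurable
    rw [hZrint] at h
    exact h
  -- pointwise a.e. decomposition
  have key : ∀ᵐ ω ∂μ,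
      (1 - (1 - I ω) * (Z ω : ℝ) / p - I ω * (1 - (Z ω : ℝ)) / q) * f ω
        = Cs.indicator f ω + (1 - (Z ω : ℝ) / p) * h0 (W ω)
            + (1 - (1 - (Z ω : ℝ)) / q) * h1 (W ω) := by
    filter_upwards [hmono, hemco] with ω hmω heω
    have hh0ω : h0 (W ω) = if D0 ω = 0 ∧ D1 ω = 0 then g (Yp 0 ω, 0) else 0 := by
      rw [hh0]
    have hh1ω : h1 (W ω) = if D0 ω = D1 ω ∧ 0 < D0 ω then g (Yp (D0 ω) ω, 1) else 0 := by
      rw [hh1]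
    have hindω : Cs.indicator f ω = if D0 ω = 0 ∧ 0 < D1 ω then f ω else 0 := by
      rw [Set.indicator_apply]
      congr 1
    rw [hindω, hh0ω, hh1ω]
    rcases hZ01 ω with hz | hz
    · -- Z ω = 0
      have hD : obsD Z D0 D1 ω = D0 ω := by simp [obsD, hz]
      have hfω : f ω = g (Yp (D0 ω) ω, I ω) := by rw [hf, obsY, hD]
      have hIω : I ω = if 0 < D0 ω then (1 : ℝ) else 0 := by rw [hI, hD]
      rcases eq_or_lt_of_le hmω with heq | hlt
      · by_cases h00 : D0 ω = 0
        · have hd10 : D1 ω = 0 := by omega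
          rw [hfω, hIω, if_neg (by omega : ¬0 < D0 ω),
            if_neg (by omega : ¬(D0 ω = 0 ∧ 0 < D1 ω)),
            if_pos (⟨h00, hd10⟩ : D0 ω = 0 ∧ D1 ω = 0),
            if_neg (by omega : ¬(D0 ω = D1 ω ∧ 0 < D0 ω)), h00, hz]
          push_cast
          ring
        · have hpos : 0 < D0 ω := Nat.pos_of_ne_zero h00
          rw [hfω, hIω, if_pos hpos,
            if_neg (by omega : ¬(D0 ω = 0 ∧ 0 < D1 ω)),
            if_neg (by omega : ¬(D0 ω = 0 ∧ D1 ω = 0)),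
            if_pos (⟨heq, hpos⟩ : D0 ω = D1 ω ∧ 0 < D0 ω), hz]
          push_cast
          ring
      · have h00 : D0 ω = 0 := heω hlt
        have hd1 : 0 < D1 ω := lt_of_le_of_lt (Nat.zero_le _) hlt
        rw [hfω, hIω, if_neg (by omega : ¬0 < D0 ω),
          if_pos (⟨h00, hd1⟩ : D0 ω = 0 ∧ 0 < D1 ω),
          if_neg (by omega : ¬(D0 ω = 0 ∧ D1 ω = 0)),
          if_neg (by omega : ¬(D0 ω = D1 ω ∧ 0 < D0 ω)), h00, hz]
        push_cast
        ring
    · -- Z ω = 1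
      have hD : obsD Z D0 D1 ω = D1 ω := by simp [obsD, hz]
      have hfω : f ω = g (Yp (D1 ω) ω, I ω) := by rw [hf, obsY, hD]
      have hIω : I ω = if 0 < D1 ω then (1 : ℝ) else 0 := by rw [hI, hD]
      rcases eq_or_lt_of_le hmω with heq | hlt
      · by_cases h00 : D0 ω = 0
        · have hd10 : D1 ω = 0 := by omega
          rw [hfω, hIω, if_neg (by omega : ¬0 < D1 ω),
            if_neg (by omega : ¬(D0 ω = 0 ∧ 0 < D1 ω)),
            if_pos (⟨h00, hd10⟩ : D0 ω = 0 ∧ D1 ω = 0),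
            if_neg (by omega : ¬(D0 ω = D1 ω ∧ 0 < D0 ω)), hd10, hz]
          push_cast
          ring
        · have hpos : 0 < D0 ω := Nat.pos_of_ne_zero h00
          have hpos1 : 0 < D1 ω := by omega
          rw [hfω, hIω, if_pos hpos1,
            if_neg (by omega : ¬(D0 ω = 0 ∧ 0 < D1 ω)),
            if_neg (by omega : ¬(D0 ω = 0 ∧ D1 ω = 0)),
            if_pos (⟨heq, hpos⟩ : D0 ω = D1 ω ∧ 0 < D0 ω), heq, hz]
          push_cast
          ring
      · have h00 : D0 ω = 0 := heω hlt
        have hd1 : 0 < D1 ω := lt_of_le_of_lt (Nat.zero_le _) hlt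
        rw [hfω, hIω, if_pos hd1,
          if_pos (⟨h00, hd1⟩ : D0 ω = 0 ∧ 0 < D1 ω),
          if_neg (by omega : ¬(D0 ω = 0 ∧ D1 ω = 0)),
          if_neg (by omega : ¬(D0 ω = D1 ω ∧ 0 < D0 ω)), hz]
        push_cast
        ring
  -- integrability of the three pieces
  have intInd : Integrable (Cs.indicator f) μ := by
    apply my_integrable (hfm.indicator hCsm) (C := C)
    intro ω; rw [Set.indicator_apply]; split_ifs
    · exact hfb ω
    · simpa using hC0
  have int0 : Integrable (fun ω => (1 - (Z ω : ℝ) / p) * h0 (W ω)) μ := by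
    apply my_integrable ((measurable_const.sub (hZrm.div_const p)).mul (h0m.comp hWm))
      (C := (1 + 1 / p) * C)
    intro ω; dsimp only [Pi.mul_apply, Function.comp_apply]; rw [abs_mul]
    refine mul_le_mul ?_ (h0b _) (abs_nonneg _) (by positivity)
    apply abs_one_sub_le
    rw [abs_div, abs_of_pos hppos]
    gcongr
    exact hZrb ω
  have int1 : Integrable (fun ω => (1 - (1 - (Z ω : ℝ)) / q) * h1 (W ω)) μ := by
    apply my_integrable
      ((measurable_const.sub ((measurable_const.sub hZrm).div_const q)).mul (h1m.comp hWm))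
      (C := (1 + 1 / q) * C)
    intro ω; dsimp only [Pi.mul_apply, Function.comp_apply]; rw [abs_mul]
    refine mul_le_mul ?_ (h1b _) (abs_nonneg _) (by positivity)
    apply abs_one_sub_le
    rw [abs_div, abs_of_pos hqpos]
    gcongr
    exact hZrb' ω
  -- split the integral
  have hsplit : (∫ ω, (1 - (1 - I ω) * (Z ω : ℝ) / p - I ω * (1 - (Z ω : ℝ)) / q) * f ω ∂μ)
      = (∫ ω, Cs.indicator f ω ∂μ) + (∫ ω, (1 - (Z ω : ℝ) / p) * h0 (W ω) ∂μ)
          + (∫ ω, (1 - (1 - (Z ω : ℝ)) / q) * h1 (W ω) ∂μ) := by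
    have e1 : ∫ ω, (Cs.indicator f ω + (1 - (Z ω : ℝ) / p) * h0 (W ω))
          + (1 - (1 - (Z ω : ℝ)) / q) * h1 (W ω) ∂μ
        = (∫ ω, Cs.indicator f ω + (1 - (Z ω : ℝ) / p) * h0 (W ω) ∂μ)
          + ∫ ω, (1 - (1 - (Z ω : ℝ)) / q) * h1 (W ω) ∂μ := integral_add (intInd.add int0) int1
    have e2 : ∫ ω, Cs.indicator f ω + (1 - (Z ω : ℝ) / p) * h0 (W ω) ∂μ
        = (∫ ω, Cs.indicator f ω ∂μ) + ∫ ω, (1 - (Z ω : ℝ) / p) * h0 (W ω) ∂μ :=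
      integral_add intInd int0
    rw [integral_congr_ae key, e1, e2]
  have hz0 : ∫ ω, (1 - (Z ω : ℝ) / p) * h0 (W ω) ∂μ = 0 := by
    have hrw : (fun ω => (1 - (Z ω : ℝ) / p) * h0 (W ω))
        = fun ω => h0 (W ω) - ((Z ω : ℝ) * h0 (W ω)) * p⁻¹ := by
      funext ω; field_simp
    have intA : Integrable (fun ω => ((Z ω : ℝ) * h0 (W ω)) * p⁻¹) μ := intZrh0.mul_const _
    rw [hrw, integral_sub inth0 intA, integral_mul_const, hmul0]
    field_simp
    simp
  have hz1 : ∫ ω, (1 - (1 - (Z ω : ℝ)) / q) * h1 (W ω) ∂μ = 0 := by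
    have hrw : (fun ω => (1 - (1 - (Z ω : ℝ)) / q) * h1 (W ω))
        = fun ω => h1 (W ω) - ((h1 (W ω) - (Z ω : ℝ) * h1 (W ω)) * q⁻¹) := by
      funext ω; field_simp
    have intB : Integrable (fun ω => h1 (W ω) - (Z ω : ℝ) * h1 (W ω)) μ := inth1.sub intZrh1
    have intA : Integrable (fun ω => (h1 (W ω) - (Z ω : ℝ) * h1 (W ω)) * q⁻¹) μ :=
      intB.mul_const _
    rw [hrw, integral_sub inth1 intA, integral_mul_const, integral_sub inth1 intZrh1, hmul1, hq1p]
    have h1p : (1 : ℝ) - p ≠ 0 := by rw [← hq1p]; exact hqne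
    field_simp
    ring
  rw [hsplit, hz0, hz1, add_zero, add_zero, integral_indicator hCsm, hden]
  rfl
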